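/- Let P : C̃ → C together with ramification numbers e be a d-fold ramified covering of finite categories. Then for every n ≥ 1, #N̄_n(C̃) = d · #N̄_n(C). -/

import Mathlib

open CategoryTheory

universe u

/-- The set of morphisms of `C` with target `x`, encoded as a sigma type. -/
abbrev Tgt (C : Type u) [SmallCategory C] (x : C) : Type u := Σ a : C, a ⟶ x

/-- The set of morphisms of `C` with source `x`, encoded as a sigma type. -/
abbrev Src (C : Type u) [SmallCategory C] (x : C) : Type u := Σ b : C, x ⟶ b

/-- The map `T(x̃) → T(P x̃)` induced by a functor `P`. -/
def tgtMap {D C : Type u} [SmallCategory D] [SmallCategory C] (P : D ⥤ C) (x : D) :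
    Tgt D x → Tgt C (P.obj x) := fun g => ⟨P.obj g.1, P.map g.2⟩

/-- The map `S(x̃) → S(P x̃)` induced by a functor `P`. -/
def srcMap {D C : Type u} [SmallCategory D] [SmallCategory C] (P : D ⥤ C) (x : D) :
    Src D x → Src C (P.obj x) := fun g => ⟨P.obj g.1, P.map g.2⟩

/-- `P : D ⥤ C` together with ramification numbers `e` is a ramified covering:
`C` is connected, `e x ≥ 1` for all `x`, `P : T(x̃) → T(P x̃)` is bijective,
every morphism of `S̄(P x̃)` has exactly `e x̃` preimages in `S̄(x̃)`, and
`e x̃ = 1` whenever `S̄(P x̃)` is empty. -/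
structure IsRamifiedCovering {D C : Type u} [SmallCategory D] [SmallCategory C]
    (P : D ⥤ C) (e : D → ℕ) : Prop where
  nonempty : Nonempty C
  zigzag : ∀ x y : C, Zigzag x y
  one_le : ∀ x : D, 1 ≤ e x
  tgt_bij : ∀ x : D, Function.Bijective (tgtMap P x)
  src_count : ∀ (x : D) (g : Src C (P.obj x)), g ≠ ⟨P.obj x, 𝟙 (P.obj x)⟩ →
    Nat.card {h : Src D x // h ≠ ⟨x, 𝟙 x⟩ ∧ srcMap P x h = g} = e x
  ram_one : ∀ x : D, (∀ g : Src C (P.obj x), g = ⟨P.obj x, 𝟙 (P.obj x)⟩) → e x = 1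


/-- A composable chain of `n` morphisms `x₀ → x₁ → ⋯ → xₙ` in `C`
(an element of `N_n(C)`). -/
structure Chain (C : Type u) [SmallCategory C] (n : ℕ) : Type u where
  obj : Fin (n + 1) → C
  map : ∀ i : Fin n, obj i.castSucc ⟶ obj i.succ

/-- A chain is non-degenerate if none of its morphisms is an identity
(an element of `N̄_n(C)`). -/
def Chain.NonDeg {C : Type u} [SmallCategory C] {n : ℕ} (c : Chain C n) : Prop :=
  ∀ i : Fin n,
    (⟨c.obj i.succ, c.map i⟩ : Src C (c.obj i.castSucc)) ≠ ⟨c.obj i.castSucc, 𝟙 _⟩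

/-- The image of a chain under a functor `P`. -/
def Chain.push {D C : Type u} [SmallCategory D] [SmallCategory C] (P : D ⥤ C) {n : ℕ}
    (c : Chain D n) : Chain C n :=
  ⟨fun i => P.obj (c.obj i), fun i => P.map (c.map i)⟩

/-- The constant identity chain `1_x` at an object `x`. -/
def Chain.const (C : Type u) [SmallCategory C] (x : C) (n : ℕ) : Chain C n :=
  ⟨fun _ => x, fun _ => 𝟙 x⟩

/-- `P` is a `d`-fold ramified covering: for every object `x` of `C`, the multiset
`R(x)` of objects over `x`, each counted with multiplicity its ramification number,
has cardinality `d`, i.e. `Σ_{P xt = x} e(xt) = d`. -/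
def IsDFold {D C : Type u} [SmallCategory D] [SmallCategory C]
    (P : D ⥤ C) (e : D → ℕ) (d : ℕ) : Prop :=
  ∀ x : C, Nat.card (Σ a : {a : D // P.obj a = x}, Fin (e a.1)) = d

section Aux

open CategoryTheory

variable {D C : Type u} [SmallCategory D] [SmallCategory C]

/-- Extensionality for chains. -/
lemma Chain.ext' {n : ℕ} {c₁ c₂ : Chain C n} (hobj : ∀ i, c₁.obj i = c₂.obj i)
    (hmap : ∀ i : Fin n, c₁.map i =
      eqToHom (hobj i.castSucc) ≫ c₂.map i ≫ eqToHom (hobj i.succ).symm) : c₁ = c₂ := by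
  obtain ⟨o₁, m₁⟩ := c₁; obtain ⟨o₂, m₂⟩ := c₂
  obtain rfl : o₁ = o₂ := funext hobj
  simp only [eqToHom_refl, Category.id_comp, Category.comp_id] at hmap
  congr 1
  exact funext hmap

lemma Chain.map_eq {n : ℕ} {c₁ c₂ : Chain C n} (h : c₁ = c₂) (i : Fin n) :
    c₁.map i = eqToHom (by rw [h]) ≫ c₂.map i ≫ eqToHom (by rw [h]) := by
  subst h; simp

variable (P : D ⥤ C) (e : D → ℕ)

/-- The bijection `T(x̃) ≃ T(P x̃)` of a ramified covering, as an equiv. -/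
noncomputable def tgtEquiv (hP : IsRamifiedCovering P e) (x : D) :
    Tgt D x ≃ Tgt C (P.obj x) := Equiv.ofBijective _ (hP.tgt_bij x)

/-- One step of the backwards lifting of a chain. -/
noncomputable def liftStep (hP : IsRamifiedCovering P e) {n : ℕ} (c : Chain C n) (i : Fin n)
    (p : {a : D // P.obj a = c.obj i.succ}) : {a : D // P.obj a = c.obj i.castSucc} :=
  ⟨((tgtEquiv P e hP p.1).symm ⟨c.obj i.castSucc, c.map i ≫ eqToHom p.2.symm⟩).1, by
    have h1 := (tgtEquiv P e hP p.1).apply_symm_apply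
      ⟨c.obj i.castSucc, c.map i ≫ eqToHom p.2.symm⟩
    exact congrArg Sigma.fst h1⟩

/-- The morphism part of one lifting step. -/
noncomputable def liftStepHom (hP : IsRamifiedCovering P e) {n : ℕ} (c : Chain C n) (i : Fin n)
    (p : {a : D // P.obj a = c.obj i.succ}) : (liftStep P e hP c i p).1 ⟶ p.1 :=
  ((tgtEquiv P e hP p.1).symm ⟨c.obj i.castSucc, c.map i ≫ eqToHom p.2.symm⟩).2

lemma liftStepHom_spec (hP : IsRamifiedCovering P e) {n : ℕ} (c : Chain C n) (i : Fin n)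
    (p : {a : D // P.obj a = c.obj i.succ}) :
    P.map (liftStepHom P e hP c i p) =
      eqToHom (liftStep P e hP c i p).2 ≫ c.map i ≫ eqToHom p.2.symm := by
  have h1 := (tgtEquiv P e hP p.1).apply_symm_apply
    ⟨c.obj i.castSucc, c.map i ≫ eqToHom p.2.symm⟩
  have h1' : (⟨P.obj ((tgtEquiv P e hP p.1).symm
        ⟨c.obj i.castSucc, c.map i ≫ eqToHom p.2.symm⟩).1,
      P.map (liftStepHom P e hP c i p)⟩ : Tgt C (P.obj p.1)) =
      ⟨c.obj i.castSucc, c.map i ≫ eqToHom p.2.symm⟩ := h1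
  obtain ⟨ha, hb⟩ := Sigma.mk.inj_iff.mp h1'
  rw [conj_eqToHom_iff_heq' _ _ (liftStep P e hP c i p).2 p.2.symm]
  exact hb.trans (comp_eqToHom_heq _ _)

/-- The objects of the lifted chain, by reverse induction. -/
noncomputable def liftObj (hP : IsRamifiedCovering P e) {n : ℕ} (c : Chain C n) (yt : D)
    (hy : P.obj yt = c.obj (Fin.last n)) : ∀ i : Fin (n + 1), {a : D // P.obj a = c.obj i} :=
  Fin.reverseInduction ⟨yt, hy⟩ (liftStep P e hP c)

lemma liftObj_castSucc (hP : IsRamifiedCovering P e) {n : ℕ} (c : Chain C n) (yt : D)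
    (hy : P.obj yt = c.obj (Fin.last n)) (i : Fin n) :
    liftObj P e hP c yt hy i.castSucc = liftStep P e hP c i (liftObj P e hP c yt hy i.succ) :=
  Fin.reverseInduction_castSucc i

/-- The lifted chain. -/
noncomputable def liftChain (hP : IsRamifiedCovering P e) {n : ℕ} (c : Chain C n) (yt : D)
    (hy : P.obj yt = c.obj (Fin.last n)) : Chain D n where
  obj i := (liftObj P e hP c yt hy i).1
  map i := eqToHom (congrArg Subtype.val (liftObj_castSucc P e hP c yt hy i)) ≫
    liftStepHom P e hP c i (liftObj P e hP c yt hy i.succ)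

lemma liftChain_last (hP : IsRamifiedCovering P e) {n : ℕ} (c : Chain C n) (yt : D)
    (hy : P.obj yt = c.obj (Fin.last n)) :
    (liftChain P e hP c yt hy).obj (Fin.last n) = yt := by
  show (liftObj P e hP c yt hy (Fin.last n)).1 = yt
  rw [liftObj, Fin.reverseInduction_last]

lemma liftChain_push (hP : IsRamifiedCovering P e) {n : ℕ} (c : Chain C n) (yt : D)
    (hy : P.obj yt = c.obj (Fin.last n)) :
    (liftChain P e hP c yt hy).push P = c := by
  refine Chain.ext' (fun i => (liftObj P e hP c yt hy i).2) ?_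
  intro i
  show P.map ((liftChain P e hP c yt hy).map i) = _
  simp only [liftChain, Functor.map_comp, eqToHom_map, liftStepHom_spec]
  simp
  rfl

/-- Two lifts of the same chain agreeing at the last object agree. -/
lemma push_inj_last (hP : IsRamifiedCovering P e) {n : ℕ} {c₁ c₂ : Chain D n}
    (hp : c₁.push P = c₂.push P) (hlast : c₁.obj (Fin.last n) = c₂.obj (Fin.last n)) :
    c₁ = c₂ := by
  have hobjP : ∀ j, P.obj (c₁.obj j) = P.obj (c₂.obj j) :=
    fun j => congrFun (congrArg Chain.obj hp) j
  have hmapP : ∀ i : Fin n, P.map (c₁.map i) =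
      eqToHom (hobjP i.castSucc) ≫ P.map (c₂.map i) ≫ eqToHom (hobjP i.succ).symm :=
    fun i => Chain.map_eq hp i
  have key : ∀ i : Fin n, ∀ hsucc : c₁.obj i.succ = c₂.obj i.succ,
      (⟨c₁.obj i.castSucc, c₁.map i⟩ : Tgt D (c₁.obj i.succ)) =
        ⟨c₂.obj i.castSucc, c₂.map i ≫ eqToHom hsucc.symm⟩ := by
    intro i hsucc
    apply (hP.tgt_bij (c₁.obj i.succ)).1
    show (⟨P.obj (c₁.obj i.castSucc), P.map (c₁.map i)⟩ : Tgt C (P.obj (c₁.obj i.succ)))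
      = ⟨P.obj (c₂.obj i.castSucc), P.map (c₂.map i ≫ eqToHom hsucc.symm)⟩
    rw [Sigma.mk.inj_iff]
    refine ⟨hobjP i.castSucc, ?_⟩
    rw [Functor.map_comp, eqToHom_map, hmapP i]
    simp
  have hobj : ∀ j, c₁.obj j = c₂.obj j := by
    refine Fin.reverseInduction hlast ?_
    intro i ih
    exact congrArg Sigma.fst (key i ih)
  refine Chain.ext' hobj ?_
  intro i
  obtain ⟨h1, h2⟩ := Sigma.mk.inj_iff.mp (key i (hobj i.succ))
  exact (conj_eqToHom_iff_heq' _ _ (hobj i.castSucc) (hobj i.succ).symm).2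
    (h2.trans (comp_eqToHom_heq _ _))

/-- The image of a degenerate morphism is degenerate. -/
lemma src_deg {X Y : D} (f : X ⟶ Y) (hdeg : (⟨Y, f⟩ : Src D X) = ⟨X, 𝟙 X⟩) :
    (⟨P.obj Y, P.map f⟩ : Src C (P.obj X)) = ⟨P.obj X, 𝟙 (P.obj X)⟩ := by
  obtain ⟨h1, h2⟩ := Sigma.mk.inj_iff.mp hdeg
  subst h1
  rw [eq_of_heq h2]
  simp

/-- If the image of a morphism is degenerate, the morphism is degenerate. -/
lemma deg_of_push_deg (hP : IsRamifiedCovering P e) {X Y : D} (f : X ⟶ Y)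
    (hdeg : (⟨P.obj Y, P.map f⟩ : Src C (P.obj X)) = ⟨P.obj X, 𝟙 (P.obj X)⟩) :
    (⟨Y, f⟩ : Src D X) = ⟨X, 𝟙 X⟩ := by
  obtain ⟨h1, h2⟩ := Sigma.mk.inj_iff.mp hdeg
  have hT : (⟨X, f⟩ : Tgt D Y) = ⟨Y, 𝟙 Y⟩ := by
    apply (hP.tgt_bij Y).1
    show (⟨P.obj X, P.map f⟩ : Tgt C (P.obj Y)) = ⟨P.obj Y, P.map (𝟙 Y)⟩
    rw [Sigma.mk.inj_iff, CategoryTheory.Functor.map_id]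
    refine ⟨h1.symm, ?_⟩
    exact h2.trans (congr_arg_heq (fun z => 𝟙 z) h1.symm)
  obtain ⟨h3, h4⟩ := Sigma.mk.inj_iff.mp hT
  subst h3
  rw [Sigma.mk.inj_iff]
  exact ⟨rfl, h4⟩

lemma nonDeg_push (hP : IsRamifiedCovering P e) {n : ℕ} {c : Chain D n} (hc : c.NonDeg) :
    (c.push P).NonDeg :=
  fun i hdeg => hc i (deg_of_push_deg P e hP (c.map i) hdeg)

lemma nonDeg_of_push {n : ℕ} {c : Chain D n} (hc : (c.push P).NonDeg) : c.NonDeg :=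
  fun i hdeg => hc i (src_deg P (c.map i) hdeg)

end Aux
section Count

open CategoryTheory

variable {D C : Type u} [SmallCategory D] [SmallCategory C]
variable (P : D ⥤ C) (e : D → ℕ) (d : ℕ)

/-- Counting lifts of a non-identity morphism in two ways: the fiber over the target of a
non-identity morphism has exactly `d` points. -/
lemma card_fiber [Fintype D] [∀ a b : D, Finite (a ⟶ b)]
    (hP : IsRamifiedCovering P e) (hd : IsDFold P e d)
    {x y : C} (g : x ⟶ y) (hg : (⟨x, g⟩ : Tgt C y) ≠ ⟨y, 𝟙 y⟩) :
    Nat.card {a : D // P.obj a = y} = d := by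
  classical
  -- the type of lifts of `g`
  have h1 : Nat.card {q : Σ (a : D) (b : D), a ⟶ b //
      P.obj q.1 = x ∧ P.obj q.2.1 = y ∧ HEq (P.map q.2.2) g} =
      Nat.card {a : D // P.obj a = y} := by
    apply Nat.card_eq_of_bijective (fun q => (⟨q.1.2.1, q.2.2.1⟩ : {a : D // P.obj a = y}))
    constructor
    · rintro ⟨⟨a₁, b₁, f₁⟩, hx₁, hy₁, hf₁⟩ ⟨⟨a₂, b₂, f₂⟩, hx₂, hy₂, hf₂⟩ hb
      have hb' : b₁ = b₂ := congrArg Subtype.val hb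
      subst hb'
      have hT : (⟨a₁, f₁⟩ : Tgt D b₁) = ⟨a₂, f₂⟩ := by
        apply (hP.tgt_bij b₁).1
        show (⟨P.obj a₁, P.map f₁⟩ : Tgt C (P.obj b₁)) = ⟨P.obj a₂, P.map f₂⟩
        rw [Sigma.mk.inj_iff]
        exact ⟨hx₁.trans hx₂.symm, hf₁.trans hf₂.symm⟩
      obtain ⟨ha, hf⟩ := Sigma.mk.inj_iff.mp hT
      subst ha
      apply Subtype.ext
      show (⟨a₁, b₁, f₁⟩ : Σ (a : D) (b : D), a ⟶ b) = ⟨a₁, b₁, f₂⟩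
      rw [eq_of_heq hf]
    · rintro ⟨b, hb⟩
      obtain ⟨⟨a, f⟩, hf⟩ := (hP.tgt_bij b).2 ⟨x, g ≫ eqToHom hb.symm⟩
      have hf' : (⟨P.obj a, P.map f⟩ : Tgt C (P.obj b)) = ⟨x, g ≫ eqToHom hb.symm⟩ := hf
      obtain ⟨ha, hfe⟩ := Sigma.mk.inj_iff.mp hf'
      exact ⟨⟨⟨a, b, f⟩, ha, hb, hfe.trans (comp_eqToHom_heq _ _)⟩, rfl⟩
  -- counting by sources
  have aux_ne : ∀ q : {q : Σ (a : D) (b : D), a ⟶ b //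
      P.obj q.1 = x ∧ P.obj q.2.1 = y ∧ HEq (P.map q.2.2) g},
      (⟨q.1.2.1, q.1.2.2⟩ : Src D q.1.1) ≠ ⟨q.1.1, 𝟙 q.1.1⟩ := by
    rintro ⟨⟨a, b, f⟩, hx', hy', hf'⟩ hcon
    obtain ⟨hba, hf1⟩ := Sigma.mk.inj_iff.mp hcon
    have hba' : b = a := hba
    subst hba'
    have hf1' : f = 𝟙 b := eq_of_heq hf1
    subst hf1'
    apply hg
    have hyx : y = x := hy'.symm.trans hx'
    subst hyx
    rw [Sigma.mk.inj_iff]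
    refine ⟨rfl, ?_⟩
    have hid : HEq (𝟙 (P.obj b)) g := by
      rw [← CategoryTheory.Functor.map_id]
      exact hf'
    exact ((congr_arg_heq (fun z => 𝟙 z) hx').symm.trans hid).symm
  have aux_img : ∀ q : {q : Σ (a : D) (b : D), a ⟶ b //
      P.obj q.1 = x ∧ P.obj q.2.1 = y ∧ HEq (P.map q.2.2) g},
      srcMap P q.1.1 ⟨q.1.2.1, q.1.2.2⟩ = ⟨y, eqToHom q.2.1 ≫ g⟩ := by
    rintro ⟨⟨a, b, f⟩, hx', hy', hf'⟩
    show (⟨P.obj b, P.map f⟩ : Src C (P.obj a)) = ⟨y, eqToHom hx' ≫ g⟩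
    rw [Sigma.mk.inj_iff]
    exact ⟨hy', hf'.trans (eqToHom_comp_heq _ _).symm⟩
  have h2 : Nat.card {q : Σ (a : D) (b : D), a ⟶ b //
      P.obj q.1 = x ∧ P.obj q.2.1 = y ∧ HEq (P.map q.2.2) g} = d := by
    have hbij : Function.Bijective (fun q : {q : Σ (a : D) (b : D), a ⟶ b //
        P.obj q.1 = x ∧ P.obj q.2.1 = y ∧ HEq (P.map q.2.2) g} =>
        (⟨⟨q.1.1, q.2.1⟩, ⟨q.1.2.1, q.1.2.2⟩, aux_ne q, aux_img q⟩ :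
          Σ xt : {a : D // P.obj a = x}, {s : Src D xt.1 //
            s ≠ ⟨xt.1, 𝟙 xt.1⟩ ∧ srcMap P xt.1 s = ⟨y, eqToHom xt.2 ≫ g⟩})) := by
      constructor
      · intro q₁ q₂ hq
        have ha : q₁.1.1 = q₂.1.1 := congrArg (fun z => z.1.1) hq
        have hb : q₁.1.2.1 = q₂.1.2.1 := congrArg (fun z => z.2.1.1) hq
        have hf : HEq q₁.1.2.2 q₂.1.2.2 := congr_arg_heq (fun z => z.2.1.2) hq
        obtain ⟨⟨a₁, b₁, f₁⟩, p₁⟩ := q₁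
        obtain ⟨⟨a₂, b₂, f₂⟩, p₂⟩ := q₂
        simp only at ha hb hf
        subst ha; subst hb
        apply Subtype.ext
        show (⟨a₁, b₁, f₁⟩ : Σ (a : D) (b : D), a ⟶ b) = ⟨a₁, b₁, f₂⟩
        rw [eq_of_heq hf]
      · rintro ⟨⟨a, ha⟩, ⟨b, f⟩, hne, himg⟩
        have himg' : (⟨P.obj b, P.map f⟩ : Src C (P.obj a)) = ⟨y, eqToHom ha ≫ g⟩ := himg
        obtain ⟨hb, hf⟩ := Sigma.mk.inj_iff.mp himg'
        exact ⟨⟨⟨a, b, f⟩, ha, hb, hf.trans (eqToHom_comp_heq _ _)⟩, rfl⟩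
    rw [Nat.card_eq_of_bijective _ hbij]
    -- now a sigma count
    haveI : ∀ xt : {a : D // P.obj a = x}, Fintype {s : Src D xt.1 //
        s ≠ ⟨xt.1, 𝟙 xt.1⟩ ∧ srcMap P xt.1 s = ⟨y, eqToHom xt.2 ≫ g⟩} :=
      fun xt => Fintype.ofFinite _
    haveI : Fintype {a : D // P.obj a = x} := Fintype.ofFinite _
    rw [Nat.card_eq_fintype_card, Fintype.card_sigma]
    have hcard : ∀ xt : {a : D // P.obj a = x}, Fintype.card {s : Src D xt.1 //
        s ≠ ⟨xt.1, 𝟙 xt.1⟩ ∧ srcMap P xt.1 s = ⟨y, eqToHom xt.2 ≫ g⟩} = e xt.1 := by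
      rintro ⟨a, ha⟩
      rw [← Nat.card_eq_fintype_card]
      apply hP.src_count
      intro hcon
      obtain ⟨h1', h2'⟩ := Sigma.mk.inj_iff.mp hcon
      apply hg
      have hyx : y = x := h1'.trans ha
      subst hyx
      rw [Sigma.mk.inj_iff]
      refine ⟨rfl, ?_⟩
      have hgid : HEq g (𝟙 (P.obj a)) := (eqToHom_comp_heq g ha).symm.trans h2'
      exact hgid.trans (congr_arg_heq (fun z => 𝟙 z) ha)
    rw [Finset.sum_congr rfl (fun xt _ => hcard xt)]
    have hdx := hd x
    rw [Nat.card_eq_fintype_card, Fintype.card_sigma] at hdx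
    simpa using hdx
  rw [← h1, h2]

end Count
section Main

open CategoryTheory

variable {D C : Type u} [SmallCategory D] [SmallCategory C]
variable (P : D ⥤ C) (e : D → ℕ)

/-- Lifts of a chain are in bijection with the fiber over the last object. -/
lemma card_chain_fiber (hP : IsRamifiedCovering P e) {n : ℕ} (c : Chain C n)
    [Finite (Chain D n)] [Finite D] :
    Nat.card {ct : Chain D n // ct.push P = c} =
      Nat.card {a : D // P.obj a = c.obj (Fin.last n)} := by
  apply Nat.card_eq_of_bijective (fun ct =>
    (⟨ct.1.obj (Fin.last n), congrFun (congrArg Chain.obj ct.2) (Fin.last n)⟩ :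
      {a : D // P.obj a = c.obj (Fin.last n)}))
  constructor
  · rintro ⟨c₁, h₁⟩ ⟨c₂, h₂⟩ hlast
    exact Subtype.ext (push_inj_last P e hP (h₁.trans h₂.symm) (congrArg Subtype.val hlast))
  · rintro ⟨yt, hy⟩
    refine ⟨⟨liftChain P e hP c yt hy, liftChain_push P e hP c yt hy⟩, ?_⟩
    exact Subtype.ext (liftChain_last P e hP c yt hy)

lemma chainFinite {E : Type u} [SmallCategory E] [Finite E] [∀ a b : E, Finite (a ⟶ b)]
    (n : ℕ) : Finite (Chain E n) := by
  let F : Chain E n → Σ obj : Fin (n + 1) → E, ∀ i : Fin n, obj i.castSucc ⟶ obj i.succ :=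
    fun c => ⟨c.obj, c.map⟩
  have hF : Function.Injective F := by
    rintro ⟨o₁, m₁⟩ ⟨o₂, m₂⟩ hq
    obtain ⟨h1, h2⟩ := Sigma.mk.inj_iff.mp hq
    congr 1
  exact Finite.of_injective F hF

end Main
/-- For a `d`-fold ramified covering of finite categories and `n ≥ 1`,
`#N̄_n(C̃) = d · #N̄_n(C)`. -/
theorem ramifiedCovering_card_nonDeg_chains {D C : Type u}
    [SmallCategory D] [SmallCategory C]
    [Fintype D] [Fintype C] [∀ a b : D, Finite (a ⟶ b)] [∀ a b : C, Finite (a ⟶ b)]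
    (P : D ⥤ C) (e : D → ℕ) (d : ℕ)
    (h : IsRamifiedCovering P e) (hd : IsDFold P e d) (n : ℕ) (hn : 1 ≤ n) :
    Nat.card {c : Chain D n // c.NonDeg} = d * Nat.card {c : Chain C n // c.NonDeg} := by
  classical
  haveI : Finite (Chain D n) := chainFinite n
  haveI : Finite (Chain C n) := chainFinite n
  haveI : Fintype {c : Chain C n // c.NonDeg} := Fintype.ofFinite _
  let f : {c : Chain D n // c.NonDeg} → {c : Chain C n // c.NonDeg} :=
    fun ct => ⟨ct.1.push P, nonDeg_push P e h ct.2⟩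
  haveI : ∀ c : {c : Chain C n // c.NonDeg},
      Fintype {ct : {c : Chain D n // c.NonDeg} // f ct = c} := fun c => Fintype.ofFinite _
  haveI : Fintype {c : Chain D n // c.NonDeg} := Fintype.ofFinite _
  have h0 : Nat.card {c : Chain D n // c.NonDeg} =
      ∑ c : {c : Chain C n // c.NonDeg},
        Nat.card {ct : {c : Chain D n // c.NonDeg} // f ct = c} := by
    rw [Nat.card_congr (Equiv.sigmaFiberEquiv f).symm, Nat.card_eq_fintype_card,
      Fintype.card_sigma]
    exact Finset.sum_congr rfl (fun c _ => (Nat.card_eq_fintype_card).symm)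
  have hfib : ∀ c : {c : Chain C n // c.NonDeg},
      Nat.card {ct : {c : Chain D n // c.NonDeg} // f ct = c} = d := by
    intro c
    have e1 : Nat.card {ct : {c : Chain D n // c.NonDeg} // f ct = c} =
        Nat.card {ct : Chain D n // ct.push P = c.1} := by
      apply Nat.card_eq_of_bijective
        (fun ct => (⟨ct.1.1, congrArg Subtype.val ct.2⟩ : {ct : Chain D n // ct.push P = c.1}))
      constructor
      · intro q₁ q₂ hcc
        have hval : (q₁.1.1 : Chain D n) = q₂.1.1 :=
          congrArg (fun z : {ct : Chain D n // ct.push P = c.1} => z.1) hcc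
        exact Subtype.ext (Subtype.ext hval)
      · rintro ⟨ct, hct⟩
        have hnd : ct.NonDeg := nonDeg_of_push P (by rw [hct]; exact c.2)
        exact ⟨⟨⟨ct, hnd⟩, Subtype.ext hct⟩, rfl⟩
    rw [e1, card_chain_fiber P e h c.1]
    have hnd := c.2
    let i0 : Fin n := ⟨n - 1, by omega⟩
    have hsucc : i0.succ = Fin.last n := by
      apply Fin.ext
      simp only [Fin.val_succ, Fin.val_last, i0]
      omega
    have hso : c.1.obj i0.succ = c.1.obj (Fin.last n) := congrArg c.1.obj hsucc
    refine card_fiber P e d h hd (c.1.map i0 ≫ eqToHom hso) ?_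
    intro hcon
    apply hnd i0
    obtain ⟨h1, h2⟩ := Sigma.mk.inj_iff.mp hcon
    rw [Sigma.mk.inj_iff]
    refine ⟨hso.trans h1.symm, ?_⟩
    have hA : HEq (c.1.map i0) (c.1.map i0 ≫ eqToHom hso) := (comp_eqToHom_heq _ _).symm
    exact (hA.trans h2).trans (congr_arg_heq (fun z => 𝟙 z) h1.symm)
  rw [h0, Finset.sum_congr rfl (fun c _ => hfib c), Finset.sum_const, smul_eq_mul,
    Finset.card_univ, mul_comm, Nat.card_eq_fintype_card]
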